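/- The function F(x) = -0.5·G(x)² + 1.5·G(x)³, where G is a continuous cumulative distribution function, is not monotonically non-decreasing; in particular, F is not a cumulative distribution function. -/

import Mathlib

/-- The Granzotto cubic transmutation with λ₁ = 0, λ₂ = -0.5, i.e.
F(x) = -0.5·G(x)² + 1.5·G(x)³, is not monotone (hence not a cdf) whenever G is a
continuous cdf attaining values strictly between 0 and 1/3. -/
theorem stmt_0 (G : ℝ → ℝ) (hGcont : Continuous G) (hGmono : Monotone G)
    (hGbot : Filter.Tendsto G Filter.atBot (nhds 0))
    (hGtop : Filter.Tendsto G Filter.atTop (nhds 1))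
    (hmid : ∃ x, 0 < G x ∧ G x < 1/3) :
    ¬ Monotone (fun x => -0.5 * (G x)^2 + 1.5 * (G x)^3) := by
  intro hF
  obtain ⟨x₀, h1, h2⟩ := hmid
  set F : ℝ → ℝ := fun x => -0.5 * (G x)^2 + 1.5 * (G x)^3 with hFdef
  have hFx0 : F x₀ < 0 := by
    have hsq : 0 < (G x₀)^2 := pow_pos h1 2
    simp only [hFdef]
    nlinarith
  have hh : Continuous (fun t : ℝ => -0.5 * t^2 + 1.5 * t^3) := by continuity
  have hlim : Filter.Tendsto F Filter.atBot (nhds 0) := by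
    have := (hh.tendsto 0).comp hGbot
    simpa [hFdef, Function.comp_def, neg_mul] using this
  have hev : ∀ᶠ y in Filter.atBot, F y ≤ F x₀ := by
    filter_upwards [Filter.eventually_le_atBot x₀] with y hy
    exact hF hy
  have : (0:ℝ) ≤ F x₀ := le_of_tendsto hlim hev
  linarith
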